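/- For each fixed m and each k ≥ 1, lim_{n→∞} μ_{n,m}(k,0) = (1/2) f_{γ_m}(k), where γ_m = 2(1 - √(1 - 1/(2m))) and f_γ is the Sibuya(γ) probability mass function. -/

import Mathlib

/-- `μ` together with eigenvalue `l` is the (unique) quasi-stationary distribution of the
2-opinion voter model on the complete bipartite graph `K_{n,m}`, tracked by the pair
`(k,h)` of 'yes' counts in the parts of sizes `n` and `m`.  `μ` is extended by `0` outside
the grid `{0,…,n}×{0,…,m}`; the absorbing states `(0,0),(n,m)` and the unreachable states
`(0,m),(n,0)` carry zero mass; `μ` is a probability vector satisfying the left-eigenvector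
equation with eigenvalue `l`, and is invariant under relabeling of the two opinions. -/
structure IsBipartiteVoterQSD (n m : ℕ) (μ : ℤ → ℤ → ℝ) (l : ℝ) : Prop where
  nonneg : ∀ k h : ℤ, 0 ≤ μ k h
  zero_outside : ∀ k h : ℤ, (k < 0 ∨ (n : ℤ) < k ∨ h < 0 ∨ (m : ℤ) < h) → μ k h = 0
  zero_corner₁ : μ 0 0 = 0
  zero_corner₂ : μ n m = 0
  zero_bp₁ : μ 0 m = 0
  zero_bp₂ : μ n 0 = 0
  sum_one : ∑ k ∈ Finset.Icc (0 : ℤ) n, ∑ h ∈ Finset.Icc (0 : ℤ) m, μ k h = 1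
  symm : ∀ k h : ℤ, μ k h = μ (n - k) (m - h)
  eigen : ∀ k h : ℤ, 0 ≤ k → k ≤ n → 0 ≤ h → h ≤ m →
    ¬(k = 0 ∧ h = 0) → ¬(k = n ∧ h = m) →
    l * μ k h
      = μ k h * (((k : ℝ) * h + ((n : ℝ) - k) * ((m : ℝ) - h)) / ((n : ℝ) * m))
        + μ (k - 1) h * ((((n : ℝ) - k + 1) * h) / ((m : ℝ) * ((n : ℝ) + m)))
        + μ (k + 1) h * ((((k : ℝ) + 1) * ((m : ℝ) - h)) / ((m : ℝ) * ((n : ℝ) + m)))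
        + μ k (h - 1) * ((((m : ℝ) - h + 1) * k) / ((n : ℝ) * ((n : ℝ) + m)))
        + μ k (h + 1) * ((((h : ℝ) + 1) * ((n : ℝ) - k)) / ((n : ℝ) * ((n : ℝ) + m)))


/-- The Sibuya probability mass function: `f_γ(k) = (γ/k!) ∏_{j=1}^{k-1} (j-γ)`. -/
noncomputable def sibuya (γ : ℝ) (k : ℕ) : ℝ :=
  γ / (Nat.factorial k) * ∏ j ∈ Finset.Icc 1 (k - 1), ((j : ℝ) - γ)

lemma qsd_rec (n m : ℕ) (hm : 1 ≤ m) (μ : ℤ → ℤ → ℝ) (l : ℝ)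
    (H : IsBipartiteVoterQSD n m μ l) (k : ℕ) (hk : 1 ≤ k) (hkn : k + 1 ≤ n) :
    μ (k+1) 0 = (((n:ℝ)+m)/((k:ℝ)+1)) * (l - ((n:ℝ)-k)/n) * μ k 0
      - μ k 1 * (((n:ℝ)-k)/((n:ℝ)*((k:ℝ)+1))) := by
  have hn0 : (0:ℝ) < n := by
    have : 0 < n := by omega
    exact_mod_cast this
  have hm0 : (0:ℝ) < m := by exact_mod_cast hm
  have hnm : (0:ℝ) < (n:ℝ) + m := by linarith
  have hk0 : (0:ℝ) < (k:ℝ) + 1 := by positivity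
  have E := H.eigen k 0 (by exact_mod_cast Nat.zero_le k) (by exact_mod_cast Nat.le_of_succ_le hkn)
    le_rfl (by exact_mod_cast Nat.zero_le m)
    (by simp; omega) (by simp; omega)
  have hneg : μ (k:ℤ) (0 - 1) = 0 := H.zero_outside k (0-1) (by right; right; left; norm_num)
  rw [hneg] at E
  push_cast at E
  simp only [mul_zero, zero_mul, zero_div, mul_zero, add_zero, sub_zero, zero_add] at E
  have hc : (((k:ℝ)+1)*(m:ℝ))/((m:ℝ)*((n:ℝ)+m)) ≠ 0 := by positivity
  have key : μ ((k:ℤ)+1) 0 * ((((k:ℝ)+1)*(m:ℝ))/((m:ℝ)*((n:ℝ)+m)))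
      = l * μ k 0 - μ k 0 * ((((n:ℝ)-k)*(m:ℝ))/((n:ℝ)*m)) - μ k 1 * (((n:ℝ)-k)/((n:ℝ)*((n:ℝ)+m))) := by
    linear_combination -E
  have h2 := eq_div_of_mul_eq hc key
  rw [h2]
  field_simp

lemma sibuya_succ (γ : ℝ) (k : ℕ) (hk : 1 ≤ k) :
    sibuya γ (k+1) = (((k:ℝ) - γ)/((k:ℝ)+1)) * sibuya γ k := by
  obtain ⟨j, rfl⟩ := Nat.exists_eq_add_of_le hk
  rw [sibuya, sibuya]
  rw [show 1 + j + 1 - 1 = j + 1 by omega, show 1 + j - 1 = j by omega,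
    Finset.prod_Icc_succ_top (by omega : 1 ≤ j + 1)]
  rw [show 1 + j + 1 = (1 + j) + 1 by omega, Nat.factorial_succ]
  have h1 : ((1 + j).factorial : ℝ) ≠ 0 := by positivity
  push_cast
  field_simp
  ring
/-- For fixed `m` and each `k ≥ 1`, `lim_{n→∞} μ_{n,m}(k,0) = (1/2) f_{γ_m}(k)`, where
`γ_m = 2(1 - √(1 - 1/(2m)))` and `f_{γ_m}` is the Sibuya pmf.  Here it is given that
`lim_n μ_{n,m}(k,h) = 0` for `h > 0` and `lim_n μ_{n,m}(1,0) = γ_m/2`. -/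
theorem bipartite_qsd_limit_sibuya (m : ℕ) (hm : 1 ≤ m)
    (μ : ℕ → ℤ → ℤ → ℝ)
    (hμ : ∀ n : ℕ, m ≤ n → 3 ≤ n → IsBipartiteVoterQSD n m (μ n)
      (1 - (2 * (1 - Real.sqrt (1 - 1 / (2 * (n : ℝ)) - 1 / (2 * (m : ℝ)))))
        / ((n : ℝ) + m)))
    (hvanish : ∀ k h : ℤ, 0 ≤ k → 0 < h → h ≤ (m : ℤ) →
      Filter.Tendsto (fun n : ℕ => μ n k h) Filter.atTop (nhds 0))
    (hone : Filter.Tendsto (fun n : ℕ => μ n 1 0) Filter.atTop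
      (nhds ((2 * (1 - Real.sqrt (1 - 1 / (2 * (m : ℝ))))) / 2))) :
    ∀ k : ℕ, 1 ≤ k →
      Filter.Tendsto (fun n : ℕ => μ n (k : ℤ) 0) Filter.atTop
        (nhds ((1 / 2) * sibuya (2 * (1 - Real.sqrt (1 - 1 / (2 * (m : ℝ))))) k)) := by
  set γm : ℝ := 2 * (1 - Real.sqrt (1 - 1 / (2 * (m : ℝ)))) with hγmdef
  set γn : ℕ → ℝ := fun n => 2 * (1 - Real.sqrt (1 - 1 / (2 * (n : ℝ)) - 1 / (2 * (m : ℝ)))) with hγndef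
  have hγ : Filter.Tendsto γn Filter.atTop (nhds γm) := by
    have h1 : Filter.Tendsto (fun n : ℕ => 1 - 1 / (2 * (n : ℝ)) - 1 / (2 * (m : ℝ)))
        Filter.atTop (nhds (1 - 0 - 1 / (2 * (m : ℝ)))) := by
      apply Filter.Tendsto.sub_const
      apply Filter.Tendsto.const_sub
      have h0 := tendsto_const_div_atTop_nhds_zero_nat (2⁻¹ : ℝ)
      refine h0.congr fun n => ?_
      rw [div_eq_mul_inv, one_div, mul_inv]
    have h2 := ((h1.sqrt.const_sub 1).const_mul 2)
    have h3 : (1:ℝ) - 0 - 1/(2*(m:ℝ)) = 1 - 1/(2*(m:ℝ)) := by ring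
    rw [h3] at h2
    exact h2
  intro k hk
  induction k, hk using Nat.le_induction with
  | base =>
    have hval : (1/2 : ℝ) * sibuya γm 1 = γm / 2 := by
      simp [sibuya]
      try ring
    rw [hval]
    simpa using hone
  | succ k hk ih =>
    have hk0 : (0:ℝ) < (k:ℝ) + 1 := by positivity
    -- the coefficient sequence
    have hA : Filter.Tendsto
        (fun n : ℕ => (((n:ℝ)+m)/((k:ℝ)+1)) * ((1 - γn n/((n:ℝ)+m)) - ((n:ℝ)-k)/n))
        Filter.atTop (nhds (((k:ℝ) - γm)/((k:ℝ)+1))) := by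
      have hA' : Filter.Tendsto
          (fun n : ℕ => ((k:ℝ) * (1 + (m:ℝ)/n) - γn n)/((k:ℝ)+1))
          Filter.atTop (nhds (((k:ℝ) * (1 + 0) - γm)/((k:ℝ)+1))) := by
        exact (((((tendsto_const_div_atTop_nhds_zero_nat (m:ℝ)).const_add 1).const_mul
          (k:ℝ)).sub hγ).div_const _)
      have heq : ∀ᶠ n : ℕ in Filter.atTop,
          ((k:ℝ) * (1 + (m:ℝ)/n) - γn n)/((k:ℝ)+1)
            = (((n:ℝ)+m)/((k:ℝ)+1)) * ((1 - γn n/((n:ℝ)+m)) - ((n:ℝ)-k)/n) := by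
        filter_upwards [Filter.eventually_ge_atTop 1] with n hn
        have hn0 : (0:ℝ) < n := by exact_mod_cast hn
        have hm0 : (0:ℝ) < m := by exact_mod_cast hm
        have hnm : (0:ℝ) < (n:ℝ) + m := by linarith
        field_simp
        try ring
      rw [show ((k:ℝ) * (1 + 0) - γm)/((k:ℝ)+1) = ((k:ℝ) - γm)/((k:ℝ)+1) by ring] at hA'
      exact hA'.congr' heq
    have hA2 : Filter.Tendsto
        (fun n : ℕ => (((n:ℝ)+m)/((k:ℝ)+1)) * ((1 - γn n/((n:ℝ)+m)) - ((n:ℝ)-k)/n))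
        Filter.atTop (nhds (((k:ℝ) - γm)/((k:ℝ)+1))) := hA
    -- the vanishing term
    have hB : Filter.Tendsto
        (fun n : ℕ => μ n k 1 * (((n:ℝ)-k)/((n:ℝ)*((k:ℝ)+1))))
        Filter.atTop (nhds 0) := by
      have hv := hvanish (k:ℤ) 1 (by exact_mod_cast Nat.zero_le k) one_pos (by exact_mod_cast hm)
      have hc : Filter.Tendsto (fun n : ℕ => ((n:ℝ)-k)/((n:ℝ)*((k:ℝ)+1)))
          Filter.atTop (nhds ((1 - 0)/((k:ℝ)+1))) := by
        have : Filter.Tendsto (fun n : ℕ => (1 - (k:ℝ)/n)/((k:ℝ)+1))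
            Filter.atTop (nhds ((1 - 0)/((k:ℝ)+1))) :=
          ((tendsto_const_div_atTop_nhds_zero_nat (k:ℝ)).const_sub 1).div_const _
        refine this.congr' ?_
        filter_upwards [Filter.eventually_ge_atTop 1] with n hn
        have hn0 : (0:ℝ) < n := by exact_mod_cast hn
        field_simp
        try ring
      have := hv.mul hc
      simpa using this
    have hT := (hA2.mul ih).sub hB
    have heq2 : ∀ᶠ n : ℕ in Filter.atTop,
        (((n:ℝ)+m)/((k:ℝ)+1)) * ((1 - γn n/((n:ℝ)+m)) - ((n:ℝ)-k)/n) * μ n k 0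
          - μ n k 1 * (((n:ℝ)-k)/((n:ℝ)*((k:ℝ)+1)))
        = μ n ((k:ℕ)+1 : ℕ) 0 := by
      filter_upwards [Filter.eventually_ge_atTop (max 3 (max m (k+1)))] with n hn
      have h3 : 3 ≤ n := le_trans (le_max_left _ _) hn
      have hmn : m ≤ n := le_trans (le_trans (le_max_left _ _) (le_max_right _ _)) hn
      have hkn : k + 1 ≤ n := le_trans (le_trans (le_max_right _ _) (le_max_right _ _)) hn
      have H := hμ n hmn h3
      have hrec := qsd_rec n m hm (μ n) _ H k hk hkn
      simp only [hγndef]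
      rw [show (((k+1:ℕ)):ℤ) = (k:ℤ)+1 by push_cast; ring]
      rw [hrec]
    have hfinal := hT.congr' heq2
    have hval : ((k:ℝ) - γm)/((k:ℝ)+1) * ((1/2) * sibuya γm k) - 0
        = (1/2) * sibuya γm (k+1) := by
      rw [sibuya_succ γm k hk]
      ring
    rw [hval] at hfinal
    exact hfinal
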